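/- Every non-center opening move loses: for every cell x of the 3×3 board with x ≠ (1,1), the position consisting of the single mark x is an N-position, so the player to move after a non-center first move (the second player of the game) has a winning strategy. -/

import Mathlib

abbrev Cell : Type := Fin 3 × Fin 3

def notaktoLines : List (Finset Cell) :=
  [ {(0,0), (0,1), (0,2)}, {(1,0), (1,1), (1,2)}, {(2,0), (2,1), (2,2)},
    {(0,0), (1,0), (2,0)}, {(0,1), (1,1), (2,1)}, {(0,2), (1,2), (2,2)},
    {(0,0), (1,1), (2,2)}, {(0,2), (1,1), (2,0)} ]

def Dead (p : Finset Cell) : Prop := ∃ l ∈ notaktoLines, l ⊆ p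

instance (p : Finset Cell) : Decidable (Dead p) := by unfold Dead; infer_instance

def allCells : List Cell :=
  [(0,0),(0,1),(0,2),(1,0),(1,1),(1,2),(2,0),(2,1),(2,2)]

lemma mem_allCells (x : Cell) : x ∈ allCells := by
  obtain ⟨⟨a,ha⟩,⟨b,hb⟩⟩ := x
  interval_cases a <;> interval_cases b <;> simp [allCells]

def fwB : Nat → Finset Cell → Bool
  | 0, _ => false
  | n+1, p => allCells.any fun x =>
      decide (x ∉ p) && decide (¬ Dead (insert x p)) && !(fwB n (insert x p))

def FirstWins (p : Finset Cell) : Prop :=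
  ∃ x, ∃ _hx : x ∉ p, ¬ Dead (insert x p) ∧ ¬ FirstWins (insert x p)
termination_by 9 - p.card
decreasing_by
  have h1 : (insert x p).card = p.card + 1 := Finset.card_insert_of_notMem _hx
  have h2 : (insert x p).card ≤ 9 := by
    simpa using Finset.card_le_univ (insert x p)
  omega

lemma fw_iff : ∀ n (p : Finset Cell), 9 ≤ n + p.card → (FirstWins p ↔ fwB n p = true) := by
  intro n
  induction n with
  | zero =>
    intro p hp
    have hcard : p.card = 9 := le_antisymm (by simpa using Finset.card_le_univ p) (by omega)
    have hpu : p = Finset.univ := Finset.eq_univ_of_card p (by simpa using hcard)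
    rw [FirstWins]
    simp [fwB, hpu]
  | succ n ih =>
    intro p hp
    rw [FirstWins]
    simp only [fwB, List.any_eq_true, Bool.and_eq_true, Bool.not_eq_true', decide_eq_true_eq]
    constructor
    · rintro ⟨x, hx, hd, hnw⟩
      refine ⟨x, mem_allCells x, ⟨hx, hd⟩, ?_⟩
      have := ih (insert x p) (by rw [Finset.card_insert_of_notMem hx]; omega)
      simp [this] at hnw
      exact hnw
    · rintro ⟨x, -, ⟨hx, hd⟩, hnw⟩
      refine ⟨x, hx, hd, ?_⟩
      have := ih (insert x p) (by rw [Finset.card_insert_of_notMem hx]; omega)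
      rw [this, hnw]
      simp

set_option maxHeartbeats 4000000 in
/-- Every non-center opening move loses: for every cell x ≠ (1,1), the
single-mark position {x} is an N-position (not dead, and the player to
move — the second player of the game — has a winning strategy). -/
theorem noncenter_opening_N_position :
    ∀ x : Cell, x ≠ (1, 1) →
      ¬ Dead ({x} : Finset Cell) ∧ FirstWins ({x} : Finset Cell) := by
  intro x hx
  have h : ¬ Dead ({x} : Finset Cell) ∧ fwB 8 ({x} : Finset Cell) = true := by
    revert hx
    revert x
    decide
  exact ⟨h.1, (fw_iff 8 {x} (by simp)).mpr h.2⟩
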